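/- Let (H, μ_H, Δ_H) be a bialgebra and α_H : H → H a bialgebra endomorphism. Then H_α = (H, μ_α = α_H ∘ μ_H, Δ_α = Δ_H ∘ α_H, α_H) is a Hom-bialgebra: (H, μ_α, α_H) is a Hom-associative algebra, (H, Δ_α, α_H) is a Hom-coassociative coalgebra, and Δ_α(μ_α(a ⊗ b)) = Σ (μ_α(a₁' ⊗ b₁')) ⊗ (μ_α(a₂' ⊗ b₂')) where Δ_α(a) = Σ a₁' ⊗ a₂', i.e., Δ_α is multiplicative with respect to μ_α. -/
import Mathlib


open TensorProduct

/-- Deforming a bialgebra along a bialgebra endomorphism yields a Hom-bialgebra. -/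
theorem stmt_7 {F : Type*} [Field F] {H : Type*} [AddCommGroup H] [Module F H]
    (μH : H ⊗[F] H →ₗ[F] H) (ΔH : H →ₗ[F] H ⊗[F] H) (αH : H →ₗ[F] H)
    -- H is a bialgebra
    (hassoc : μH ∘ₗ LinearMap.lTensor H μH ∘ₗ (TensorProduct.assoc F H H H).toLinearMap =
      μH ∘ₗ LinearMap.rTensor H μH)
    (hcoassoc : LinearMap.lTensor H ΔH ∘ₗ ΔH =
      (TensorProduct.assoc F H H H).toLinearMap ∘ₗ LinearMap.rTensor H ΔH ∘ₗ ΔH)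
    (hbi : ΔH ∘ₗ μH = TensorProduct.map μH μH ∘ₗ
      (TensorProduct.tensorTensorTensorComm F H H H H).toLinearMap ∘ₗ
      TensorProduct.map ΔH ΔH)
    -- α_H is a bialgebra endomorphism
    (hαμ : αH ∘ₗ μH = μH ∘ₗ TensorProduct.map αH αH)
    (hαΔ : ΔH ∘ₗ αH = TensorProduct.map αH αH ∘ₗ ΔH) :
    -- (H, μ_α = α_H ∘ μ_H, α_H) is a Hom-associative algebra
    (αH ∘ₗ (αH ∘ₗ μH) = (αH ∘ₗ μH) ∘ₗ TensorProduct.map αH αH ∧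
     (αH ∘ₗ μH) ∘ₗ TensorProduct.map αH (αH ∘ₗ μH) ∘ₗ
        (TensorProduct.assoc F H H H).toLinearMap =
      (αH ∘ₗ μH) ∘ₗ TensorProduct.map (αH ∘ₗ μH) αH) ∧
    -- (H, Δ_α = Δ_H ∘ α_H, α_H) is a Hom-coassociative coalgebra
    ((ΔH ∘ₗ αH) ∘ₗ αH = TensorProduct.map αH αH ∘ₗ (ΔH ∘ₗ αH) ∧
     TensorProduct.map αH (ΔH ∘ₗ αH) ∘ₗ (ΔH ∘ₗ αH) =
      (TensorProduct.assoc F H H H).toLinearMap ∘ₗ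
        TensorProduct.map (ΔH ∘ₗ αH) αH ∘ₗ (ΔH ∘ₗ αH)) ∧
    -- Δ_α is multiplicative with respect to μ_α
    ((ΔH ∘ₗ αH) ∘ₗ (αH ∘ₗ μH) =
      TensorProduct.map (αH ∘ₗ μH) (αH ∘ₗ μH) ∘ₗ
        (TensorProduct.tensorTensorTensorComm F H H H H).toLinearMap ∘ₗ
        TensorProduct.map (ΔH ∘ₗ αH) (ΔH ∘ₗ αH)) := by
  
  have h1 : TensorProduct.map αH (αH ∘ₗ μH)
      = TensorProduct.map αH αH ∘ₗ LinearMap.lTensor H μH := by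
    rw [LinearMap.lTensor, ← TensorProduct.map_comp, LinearMap.comp_id]
  have h2 : TensorProduct.map (αH ∘ₗ μH) αH
      = TensorProduct.map αH αH ∘ₗ LinearMap.rTensor H μH := by
    rw [LinearMap.rTensor, ← TensorProduct.map_comp, LinearMap.comp_id]
  have h3 : TensorProduct.map αH (ΔH ∘ₗ αH)
      = LinearMap.lTensor H ΔH ∘ₗ TensorProduct.map αH αH := by
    rw [LinearMap.lTensor, ← TensorProduct.map_comp, LinearMap.id_comp]
  have h4 : TensorProduct.map (ΔH ∘ₗ αH) αH
      = LinearMap.rTensor H ΔH ∘ₗ TensorProduct.map αH αH := by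
    rw [LinearMap.rTensor, ← TensorProduct.map_comp, LinearMap.id_comp]
  refine ⟨⟨?_, ?_⟩, ⟨?_, ?_⟩, ?_⟩
  · rw [LinearMap.comp_assoc, hαμ]
  · rw [h1, h2]
    calc (αH ∘ₗ μH) ∘ₗ (TensorProduct.map αH αH ∘ₗ LinearMap.lTensor H μH) ∘ₗ
          (TensorProduct.assoc F H H H).toLinearMap
        = αH ∘ₗ (μH ∘ₗ TensorProduct.map αH αH) ∘ₗ LinearMap.lTensor H μH ∘ₗ
          (TensorProduct.assoc F H H H).toLinearMap := by
          simp only [LinearMap.comp_assoc]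
      _ = αH ∘ₗ αH ∘ₗ μH ∘ₗ LinearMap.lTensor H μH ∘ₗ
          (TensorProduct.assoc F H H H).toLinearMap := by
          rw [← hαμ]; simp only [LinearMap.comp_assoc]
      _ = αH ∘ₗ αH ∘ₗ μH ∘ₗ LinearMap.rTensor H μH := by rw [← hassoc]
      _ = αH ∘ₗ (μH ∘ₗ TensorProduct.map αH αH) ∘ₗ LinearMap.rTensor H μH := by
          rw [← hαμ]; simp only [LinearMap.comp_assoc]
      _ = (αH ∘ₗ μH) ∘ₗ TensorProduct.map αH αH ∘ₗ LinearMap.rTensor H μH := by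
          simp only [LinearMap.comp_assoc]
  · rw [← LinearMap.comp_assoc, hαΔ, LinearMap.comp_assoc]
  · rw [h3, h4]
    calc (LinearMap.lTensor H ΔH ∘ₗ TensorProduct.map αH αH) ∘ₗ (ΔH ∘ₗ αH)
        = LinearMap.lTensor H ΔH ∘ₗ (TensorProduct.map αH αH ∘ₗ ΔH) ∘ₗ αH := by
          simp only [LinearMap.comp_assoc]
      _ = (LinearMap.lTensor H ΔH ∘ₗ ΔH) ∘ₗ αH ∘ₗ αH := by
          rw [← hαΔ]; simp only [LinearMap.comp_assoc]
      _ = (TensorProduct.assoc F H H H).toLinearMap ∘ₗ LinearMap.rTensor H ΔH ∘ₗ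
          (TensorProduct.map αH αH ∘ₗ ΔH) ∘ₗ αH := by
          rw [hcoassoc, ← hαΔ]; simp only [LinearMap.comp_assoc]
      _ = (TensorProduct.assoc F H H H).toLinearMap ∘ₗ
          (LinearMap.rTensor H ΔH ∘ₗ TensorProduct.map αH αH) ∘ₗ ΔH ∘ₗ αH := by
          simp only [LinearMap.comp_assoc]
  · have L : (ΔH ∘ₗ αH) ∘ₗ (αH ∘ₗ μH)
        = TensorProduct.map αH αH ∘ₗ (ΔH ∘ₗ μH) ∘ₗ TensorProduct.map αH αH := by
      rw [hαΔ, LinearMap.comp_assoc, hαμ, LinearMap.comp_assoc]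
    have R : TensorProduct.map (αH ∘ₗ μH) (αH ∘ₗ μH) ∘ₗ
        (TensorProduct.tensorTensorTensorComm F H H H H).toLinearMap ∘ₗ
        TensorProduct.map (ΔH ∘ₗ αH) (ΔH ∘ₗ αH)
        = TensorProduct.map αH αH ∘ₗ (ΔH ∘ₗ μH) ∘ₗ TensorProduct.map αH αH := by
      rw [TensorProduct.map_comp, TensorProduct.map_comp, hbi]
      simp only [LinearMap.comp_assoc]
    exact L.trans R.symm
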